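/- Let n ∈ ℕ be even and define F_k^n = 2^{−n} · C(k, k/2) · C(n−k, (n−k)/2) for even k with 0 ≤ k ≤ n and F_k^n = 0 otherwise. Define real coefficients p_0, …, p_n by: p_n = √( 2^{−n} · C(n, n/2) / n! ); for even k with 0 < k ≤ n, p_{n−k} = (−1)^{k/2} · 2^{k/2} · (k/2)! · C(n/2, k/2)² · p_n; and p_{n−k} = 0 for odd k. Then for all x ∈ ℝ, ∑_{k=0}^{n} (−1)^k F_k^n L_k(x) = ∑_{l=0}^{n} x^l · ∑_{i,j ≥ 0, i+j = 2n−2l} p_{n−i} p_{n−j}, with the convention p_j = 0 for j ∉ {0, …, n}. -/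

import Mathlib

open Finset

/-- The `k`-th Laguerre polynomial: `L_k(x) = ∑_{l=0}^k ((-1)^l / l!) C(k,l) x^l`. -/
noncomputable def laguerreL (k : ℕ) (x : ℝ) : ℝ :=
  ∑ l ∈ Finset.range (k + 1), ((-1 : ℝ) ^ l / (l.factorial : ℝ)) * (k.choose l : ℝ) * x ^ l

noncomputable def sosV (m : ℕ) (a : ℤ) : ℝ :=
  if 0 ≤ a then (m.choose a.toNat : ℝ) / (a.toNat.factorial : ℝ) else 0

noncomputable def sosU (m l : ℕ) : ℝ :=
  ∑ a ∈ Finset.range (l + 1), sosV m a * sosV m ((l : ℤ) - a)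

noncomputable def sosA (m l : ℕ) : ℝ :=
  ∑ u ∈ Finset.range (m + 1),
    (((2*u).choose u : ℕ) : ℝ) * (((2*m - 2*u).choose (m - u) : ℕ) : ℝ) * (((2*u).choose l : ℕ) : ℝ)

noncomputable def sosH (m l : ℕ) : ℝ := 4^m * (l.factorial : ℝ) / 2^l * sosU m l






lemma sosV_neg (m : ℕ) {a : ℤ} (h : a < 0) : sosV m a = 0 := by
  simp [sosV, not_le.mpr h]

lemma sosV_nat (m a : ℕ) : sosV m a = (m.choose a : ℝ) / (a.factorial : ℝ) := by
  simp [sosV]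

lemma sosV_gt (m : ℕ) {a : ℤ} (h : (m : ℤ) < a) : sosV m a = 0 := by
  rcases le_or_gt 0 a with h0 | h0
  · have : m < a.toNat := by omega
    simp [sosV, h0, Nat.choose_eq_zero_of_lt this]
  · exact sosV_neg m h0

/-- universal real absorption identity -/
lemma chooseR (n k : ℕ) :
    ((k : ℝ) + 1) * (n.choose (k+1) : ℝ) = ((n : ℝ) - k) * (n.choose k : ℝ) := by
  rcases le_or_gt (k+1) n with h | h
  · have := Nat.choose_succ_right_eq n k
    have hcast : ((n.choose (k+1) * (k+1) : ℕ) : ℝ) = ((n.choose k * (n - k) : ℕ) : ℝ) := by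
      exact_mod_cast congrArg (Nat.cast (R := ℝ)) this
    push_cast [Nat.cast_sub (by omega : k ≤ n)] at hcast
    linarith
  · rcases eq_or_lt_of_le (by omega : n ≤ k) with h2 | h2
    · subst h2
      simp [Nat.choose_succ_self]
    · rw [Nat.choose_eq_zero_of_lt h2, Nat.choose_eq_zero_of_lt (by omega)]
      ring

/-- recurrence `(j+1)² v_{j+1} = (m-j) v_j`, for all integers `j`. -/
lemma sosV_rec (m : ℕ) (j : ℤ) :
    ((j : ℝ) + 1)^2 * sosV m (j + 1) = ((m : ℝ) - (j : ℝ)) * sosV m j := by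
  rcases lt_trichotomy j (-1) with h | h | h
  · rw [sosV_neg m (by omega), sosV_neg m (by omega)]; ring
  · subst h; norm_num [sosV_neg m (by norm_num : (-1:ℤ) < 0), sosV]
  · obtain ⟨a, rfl⟩ := Int.eq_ofNat_of_zero_le (by omega : (0:ℤ) ≤ j)
    have h1 : ((a : ℤ) + 1) = ((a + 1 : ℕ) : ℤ) := by push_cast; ring
    rw [h1, sosV_nat, sosV_nat]
    have hc := chooseR m a
    have hfa : ((a+1).factorial : ℝ) = ((a:ℝ)+1) * (a.factorial : ℝ) := by
      rw [Nat.factorial_succ]; push_cast; ring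
    have hfa0 : (a.factorial : ℝ) ≠ 0 := by exact_mod_cast a.factorial_ne_zero
    have hfa10 : ((a+1).factorial : ℝ) ≠ 0 := by exact_mod_cast (a+1).factorial_ne_zero
    push_cast
    field_simp
    rw [hfa]
    ring_nf
    ring_nf at hc
    nlinarith [hc]


lemma sosU_rec (m l : ℕ) :
    ((l:ℝ)+2)^3 * sosU m (l+2)
      = (4*(m:ℝ)*((l:ℝ)+1) + 2*(m:ℝ) - 3*((l:ℝ)+1)^2 - ((l:ℝ)+1)) * sosU m (l+1)
        + 2*(2*(m:ℝ) - (l:ℝ)) * sosU m l := by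
  have Φ : ℕ → ℝ := fun a => 0
  set V : ℤ → ℝ := sosV m with hV
  set Φ : ℕ → ℝ := fun a =>
    -2*(a:ℝ)^2 * (V a * V ((l:ℤ)+1-a))
      + (3*(l:ℝ)-2*(a:ℝ)+6)*((a:ℝ)-1-(m:ℝ)) * (V ((a:ℤ)-1) * V ((l:ℤ)+2-a)) with hPhi
  set R : ℕ → ℝ := fun a =>
    ((l:ℝ)+2)^3 * (V a * V ((l:ℤ)+2-a))
      - (4*(m:ℝ)*((l:ℝ)+1)+2*(m:ℝ)-3*((l:ℝ)+1)^2-((l:ℝ)+1)) * (V a * V ((l:ℤ)+1-a))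
      - (2*(2*(m:ℝ)-(l:ℝ))) * (V a * V ((l:ℤ)-a)) with hR
  have key : ∀ a : ℕ, R a = Φ (a+1) - Φ a := by
    intro a
    have h1 := sosV_rec m (a : ℤ)
    have h2 := sosV_rec m ((a:ℤ) - 1)
    have h3 := sosV_rec m ((l:ℤ) - a)
    have h4 := sosV_rec m ((l:ℤ) + 1 - a)
    rw [show (a:ℤ) - 1 + 1 = (a:ℤ) from by ring] at h2
    rw [show (l:ℤ) - a + 1 = (l:ℤ) + 1 - a from by ring] at h3
    rw [show (l:ℤ) + 1 - a + 1 = (l:ℤ) + 2 - a from by ring] at h4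
    push_cast at h1 h2 h3 h4
    simp only [hR, hPhi, hV]
    push_cast
    rw [show (l:ℤ) + 1 - ((a:ℤ)+1) = (l:ℤ) - a from by ring,
        show (a:ℤ) + 1 - 1 = (a:ℤ) from by ring,
        show (l:ℤ) + 2 - ((a:ℤ)+1) = (l:ℤ) + 1 - a from by ring]
    linear_combination (2*sosV m ((l:ℤ)-a))*h1
      + ((3*(l:ℝ)+6-2*(a:ℝ))*sosV m ((l:ℤ)+2-a))*h2
      + (2*sosV m (a:ℤ))*h3 + ((2*(a:ℝ)+(l:ℝ)+2)*sosV m (a:ℤ))*h4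
  have tele : ∑ a ∈ Finset.range (l+3), R a = Φ (l+3) - Φ 0 := by
    rw [Finset.sum_congr rfl (fun a _ => key a)]
    exact Finset.sum_range_sub Φ (l+3)
  have hΦ0 : Φ 0 = 0 := by
    simp only [hPhi, hV]
    rw [sosV_neg m (by omega : ((0:ℕ):ℤ) - 1 < 0)]
    push_cast; ring
  have hΦtop : Φ (l+3) = 0 := by
    simp only [hPhi, hV]
    rw [sosV_neg m (by push_cast; omega : (l:ℤ) + 1 - ((l+3:ℕ):ℤ) < 0),
        sosV_neg m (by push_cast; omega : (l:ℤ) + 2 - ((l+3:ℕ):ℤ) < 0)]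
    ring
  have sum1 : ∑ a ∈ Finset.range (l+3), V a * V ((l:ℤ)+2-a) = sosU m (l+2) := by
    unfold sosU
    refine Finset.sum_congr rfl fun a _ => ?_
    rw [hV]
    congr 2
    all_goals (push_cast; ring)
  have sum2 : ∑ a ∈ Finset.range (l+3), V a * V ((l:ℤ)+1-a) = sosU m (l+1) := by
    rw [Finset.sum_range_succ]
    rw [hV, sosV_neg m (by push_cast; omega : (l:ℤ) + 1 - ((l+2:ℕ):ℤ) < 0)]
    unfold sosU
    rw [mul_zero, add_zero]
    refine Finset.sum_congr rfl fun a _ => ?_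
    congr 2
    all_goals (push_cast; ring)
  have sum3 : ∑ a ∈ Finset.range (l+3), V a * V ((l:ℤ)-a) = sosU m l := by
    rw [Finset.sum_range_succ, Finset.sum_range_succ]
    rw [hV, sosV_neg m (by push_cast; omega : (l:ℤ) - ((l+2:ℕ):ℤ) < 0),
        sosV_neg m (by push_cast; omega : (l:ℤ) - ((l+1:ℕ):ℤ) < 0)]
    unfold sosU
    rw [mul_zero, add_zero, mul_zero, add_zero]
  have expand : ∑ a ∈ Finset.range (l+3), R a
      = ((l:ℝ)+2)^3 * sosU m (l+2)
        - (4*(m:ℝ)*((l:ℝ)+1)+2*(m:ℝ)-3*((l:ℝ)+1)^2-((l:ℝ)+1)) * sosU m (l+1)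
        - (2*(2*(m:ℝ)-(l:ℝ))) * sosU m l := by
    simp only [hR]
    rw [← sum1, ← sum2, ← sum3]
    rw [Finset.mul_sum, Finset.mul_sum, Finset.mul_sum, ← Finset.sum_sub_distrib,
      ← Finset.sum_sub_distrib]
  rw [tele, hΦ0, hΦtop] at expand
  linear_combination -expand



/-- the key scalar identity for the `A`-side recurrence -/
lemma sosKK (m u l : ℕ) :
    2*((l:ℝ)+2)^2 * (((2*u).choose (l+2) : ℕ) : ℝ)
      - (4*(m:ℝ)*((l:ℝ)+1)+2*(m:ℝ)-3*((l:ℝ)+1)^2-((l:ℝ)+1)) * (((2*u).choose (l+1) : ℕ) : ℝ)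
      - (((l:ℝ)+1)*(2*(m:ℝ)-(l:ℝ))) * (((2*u).choose l : ℕ) : ℝ)
    = 2*(u:ℝ)*(2*(m:ℝ)+1-2*(u:ℝ)) * (((2*u-1).choose (l+1) : ℕ) : ℝ)
      - 2*(2*(u:ℝ)+1)*((m:ℝ)-(u:ℝ)) * (((2*u+1).choose (l+1) : ℕ) : ℝ) := by
  rcases u with _ | w
  · -- u = 0
    rcases l with _ | t
    · norm_num
    · have h1 : (0:ℕ).choose (t+1) = 0 := Nat.choose_eq_zero_of_lt (by omega)
      have h2 : (0:ℕ).choose (t+2) = 0 := Nat.choose_eq_zero_of_lt (by omega)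
      have h3 : (0:ℕ).choose (t+3) = 0 := Nat.choose_eq_zero_of_lt (by omega)
      have h4 : (1:ℕ).choose (t+2) = 0 := Nat.choose_eq_zero_of_lt (by omega)
      norm_num [h1, h2, h3, h4]
  · -- u = w+1
    have e1 : 2*(w+1) = (2*w+1)+1 := by omega
    have e2 : 2*(w+1)+1 = ((2*w+1)+1)+1 := by omega
    have e3 : 2*(w+1)-1 = 2*w+1 := by omega
    rw [e2, e3, e1]
    rcases l with _ | t
    · -- l = 0
      have hb1 : (((2*w+1)+1).choose 1 : ℝ) = 2*(w:ℝ)+2 := by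
        rw [Nat.choose_one_right]; push_cast; ring
      have hc : ((((2*w+1)+1)+1).choose 1 : ℝ) = 2*(w:ℝ)+3 := by
        rw [Nat.choose_one_right]; push_cast; ring
      have ha2 : ((2*w+1).choose 1 : ℝ) = 2*(w:ℝ)+1 := by
        rw [Nat.choose_one_right]; push_cast; ring
      have hB2 : (((2*w+1)+1).choose 2 : ℝ) = (2*(w:ℝ)+1)*((w:ℝ)+1) := by
        have h := chooseR ((2*w+1)+1) 1
        rw [Nat.choose_one_right] at h
        push_cast at h
        linarith
      have hB0 : (((2*w+1)+1).choose 0 : ℝ) = 1 := by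
        rw [Nat.choose_zero_right]; norm_num
      rw [hb1, hc, ha2, hB2, hB0]
      push_cast
      ring
    · -- l = t+1 : generic case
      have hb1 : (((2*w+1)+1).choose (t+1) : ℝ)
          = ((2*w+1).choose t : ℝ) + ((2*w+1).choose (t+1) : ℝ) := by
        exact_mod_cast congrArg (Nat.cast (R := ℝ)) (Nat.choose_succ_succ (2*w+1) t)
      have hb2 : (((2*w+1)+1).choose (t+2) : ℝ)
          = ((2*w+1).choose (t+1) : ℝ) + ((2*w+1).choose (t+2) : ℝ) := by
        exact_mod_cast congrArg (Nat.cast (R := ℝ)) (Nat.choose_succ_succ (2*w+1) (t+1))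
      have hb3 : (((2*w+1)+1).choose (t+3) : ℝ)
          = ((2*w+1).choose (t+2) : ℝ) + ((2*w+1).choose (t+3) : ℝ) := by
        exact_mod_cast congrArg (Nat.cast (R := ℝ)) (Nat.choose_succ_succ (2*w+1) (t+2))
      have hcc : ((((2*w+1)+1)+1).choose (t+2) : ℝ)
          = (((2*w+1)+1).choose (t+1) : ℝ) + (((2*w+1)+1).choose (t+2) : ℝ) := by
        exact_mod_cast congrArg (Nat.cast (R := ℝ)) (Nat.choose_succ_succ ((2*w+1)+1) (t+1))
      have h1 := chooseR (2*w+1) (t+2)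
      have h2 := chooseR (2*w+1) (t+1)
      have h3 := chooseR (2*w+1) t
      push_cast at h1 h2 h3 ⊢
      linear_combination
        (-4+2*(m:ℝ)+3*(t:ℝ)-2*(t:ℝ)*(m:ℝ)+(t:ℝ)^2-10*(w:ℝ)+4*(w:ℝ)*(m:ℝ)-4*(w:ℝ)^2) * hb1
        + (8-4*(m:ℝ)+13*(t:ℝ)-4*(t:ℝ)*(m:ℝ)+3*(t:ℝ)^2-10*(w:ℝ)+4*(w:ℝ)*(m:ℝ)-4*(w:ℝ)^2) * hb2
        + (2*((t:ℝ)+3)^2) * hb3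
        + (-6+6*(m:ℝ)-10*(w:ℝ)+4*(w:ℝ)*(m:ℝ)-4*(w:ℝ)^2) * hcc
        + (2*((t:ℝ)+3)) * h1
        + (11-4*(m:ℝ)+3*(t:ℝ)+4*(w:ℝ)) * h2
        + (4-2*(m:ℝ)+(t:ℝ)+2*(w:ℝ)) * h3

/-- the scalar "link": for `u < m`,
`(u+1)(2m-2u-1) c_{u+1} d_{u+1} = (2u+1)(m-u) c_u d_u`. -/
lemma sosLink (m u : ℕ) (hu : u < m) :
    ((u:ℝ)+1) * (2*(m:ℝ)-2*(u:ℝ)-1) * (((2*(u+1)).choose (u+1) : ℕ) : ℝ)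
        * (((2*m - 2*(u+1)).choose (m - (u+1)) : ℕ) : ℝ)
    = (2*(u:ℝ)+1) * ((m:ℝ)-(u:ℝ)) * (((2*u).choose u : ℕ) : ℝ)
        * (((2*m - 2*u).choose (m - u) : ℕ) : ℝ) := by
  obtain ⟨j, hj⟩ : ∃ j, m - u = j + 1 := ⟨m - u - 1, by omega⟩
  have hn1 : ((u+1) * Nat.centralBinom (u+1) : ℕ) = (2 * (2*u+1) * Nat.centralBinom u : ℕ) :=
    Nat.succ_mul_centralBinom_succ u
  have hn2 : ((j+1) * Nat.centralBinom (j+1) : ℕ) = (2 * (2*j+1) * Nat.centralBinom j : ℕ) :=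
    Nat.succ_mul_centralBinom_succ j
  have hd1 : (2*m - 2*u).choose (m - u) = Nat.centralBinom (j+1) := by
    rw [show 2*m - 2*u = 2*(j+1) from by omega, hj]; rfl
  have hd2 : (2*m - 2*(u+1)).choose (m - (u+1)) = Nat.centralBinom j := by
    rw [show 2*m - 2*(u+1) = 2*j from by omega, show m - (u+1) = j from by omega]; rfl
  have hc1 : (2*u).choose u = Nat.centralBinom u := rfl
  have hc2 : (2*(u+1)).choose (u+1) = Nat.centralBinom (u+1) := rfl
  rw [hd1, hd2, hc1, hc2]
  have hmu : (m:ℝ) - u = (j:ℝ) + 1 := by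
    have : (m - u : ℕ) = j + 1 := hj
    have := congrArg (Nat.cast (R := ℝ)) this
    push_cast [Nat.cast_sub (by omega : u ≤ m)] at this
    linarith
  have hn1R : ((u:ℝ)+1) * (Nat.centralBinom (u+1) : ℝ) = 2*(2*(u:ℝ)+1) * (Nat.centralBinom u : ℝ) := by
    exact_mod_cast congrArg (Nat.cast (R := ℝ)) hn1
  have hn2R : ((j:ℝ)+1) * (Nat.centralBinom (j+1) : ℝ) = 2*(2*(j:ℝ)+1) * (Nat.centralBinom j : ℝ) := by
    exact_mod_cast congrArg (Nat.cast (R := ℝ)) hn2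
  have h2m : 2*(m:ℝ)-2*(u:ℝ)-1 = 2*(j:ℝ)+1 := by linarith
  rw [h2m, hmu]
  linear_combination ((2*(j:ℝ)+1) * (Nat.centralBinom j : ℝ)) * hn1R
    - ((2*(u:ℝ)+1) * (Nat.centralBinom u : ℝ)) * hn2R

lemma sosA_rec (m l : ℕ) :
    2*((l:ℝ)+2)^2 * sosA m (l+2)
      = (4*(m:ℝ)*((l:ℝ)+1)+2*(m:ℝ)-3*((l:ℝ)+1)^2-((l:ℝ)+1)) * sosA m (l+1)
        + (((l:ℝ)+1)*(2*(m:ℝ)-(l:ℝ))) * sosA m l := by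
  set c : ℕ → ℝ := fun u => (((2*u).choose u : ℕ) : ℝ) with hc
  set d : ℕ → ℝ := fun u => (((2*m - 2*u).choose (m - u) : ℕ) : ℝ) with hd
  set Φ : ℕ → ℝ := fun u =>
    2*(u:ℝ)*(2*(m:ℝ)+1-2*(u:ℝ)) * (c u * d u) * (((2*u-1).choose (l+1) : ℕ) : ℝ) with hΦ
  set Φ' : ℕ → ℝ := fun u =>
    2*(2*(u:ℝ)+1)*((m:ℝ)-(u:ℝ)) * (c u * d u) * (((2*u+1).choose (l+1) : ℕ) : ℝ) with hΦ'
  have key : ∀ u : ℕ,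
      2*((l:ℝ)+2)^2 * ((c u * d u) * (((2*u).choose (l+2) : ℕ) : ℝ))
        - (4*(m:ℝ)*((l:ℝ)+1)+2*(m:ℝ)-3*((l:ℝ)+1)^2-((l:ℝ)+1))
            * ((c u * d u) * (((2*u).choose (l+1) : ℕ) : ℝ))
        - (((l:ℝ)+1)*(2*(m:ℝ)-(l:ℝ))) * ((c u * d u) * (((2*u).choose l : ℕ) : ℝ))
      = Φ u - Φ' u := by
    intro u
    have := sosKK m u l
    simp only [hΦ, hΦ']
    linear_combination (c u * d u) * this
  have link : ∀ u ∈ Finset.range m, Φ (u+1) = Φ' u := by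
    intro u hu
    have hum : u < m := by simpa using hu
    have hL := sosLink m u hum
    simp only [hΦ, hΦ', hc, hd]
    have e1 : 2*(u+1)-1 = 2*u+1 := by omega
    rw [e1]
    push_cast
    linear_combination 2 * (((2*u+1).choose (l+1) : ℕ) : ℝ) * hL
  have hΦ0 : Φ 0 = 0 := by simp [hΦ]
  have hΦ'm : Φ' m = 0 := by simp only [hΦ']; ring
  have sums : ∑ u ∈ Finset.range (m+1), Φ u = ∑ u ∈ Finset.range (m+1), Φ' u := by
    rw [Finset.sum_range_succ' Φ m, Finset.sum_range_succ Φ' m, hΦ0, hΦ'm,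
      add_zero, add_zero]
    exact Finset.sum_congr rfl link
  have expand : ∑ u ∈ Finset.range (m+1),
      (2*((l:ℝ)+2)^2 * ((c u * d u) * (((2*u).choose (l+2) : ℕ) : ℝ))
        - (4*(m:ℝ)*((l:ℝ)+1)+2*(m:ℝ)-3*((l:ℝ)+1)^2-((l:ℝ)+1))
            * ((c u * d u) * (((2*u).choose (l+1) : ℕ) : ℝ))
        - (((l:ℝ)+1)*(2*(m:ℝ)-(l:ℝ))) * ((c u * d u) * (((2*u).choose l : ℕ) : ℝ)))
      = 0 := by
    rw [Finset.sum_congr rfl (fun u _ => key u), Finset.sum_sub_distrib, sums]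
    ring
  have hAe : ∀ l' : ℕ, sosA m l' = ∑ u ∈ Finset.range (m+1), (c u * d u) * (((2*u).choose l' : ℕ) : ℝ) := by
    intro l'
    unfold sosA
    exact Finset.sum_congr rfl fun u _ => by simp only [hc, hd]
  rw [hAe, hAe, hAe]
  rw [Finset.sum_sub_distrib, Finset.sum_sub_distrib] at expand
  rw [← Finset.mul_sum, ← Finset.mul_sum, ← Finset.mul_sum] at expand
  linear_combination expand



lemma sosH_rec (m l : ℕ) :
    2*((l:ℝ)+2)^2 * sosH m (l+2)
      = (4*(m:ℝ)*((l:ℝ)+1)+2*(m:ℝ)-3*((l:ℝ)+1)^2-((l:ℝ)+1)) * sosH m (l+1)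
        + (((l:ℝ)+1)*(2*(m:ℝ)-(l:ℝ))) * sosH m l := by
  have f1 : ((l+1).factorial : ℝ) = ((l:ℝ)+1) * (l.factorial : ℝ) := by
    rw [Nat.factorial_succ]; push_cast; ring
  have f2 : ((l+2).factorial : ℝ) = ((l:ℝ)+2) * ((l:ℝ)+1) * (l.factorial : ℝ) := by
    rw [show l+2 = (l+1)+1 from rfl, Nat.factorial_succ, Nat.factorial_succ]; push_cast; ring
  have p1 : (2:ℝ)^(l+1) = 2 * 2^l := by ring
  have p2 : (2:ℝ)^(l+2) = 4 * 2^l := by ring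
  have h2l : (2:ℝ)^l ≠ 0 := by positivity
  unfold sosH
  rw [f1, f2, p1, p2]
  have := sosU_rec m l
  linear_combination ((4:ℝ)^m * (l.factorial : ℝ) * ((l:ℝ)+1) / (2 * 2^l)) * this

lemma sosA_top (m : ℕ) : sosA m (2*m+1) = 0 := by
  unfold sosA
  refine Finset.sum_eq_zero fun u hu => ?_
  have : (2*u).choose (2*m+1) = 0 :=
    Nat.choose_eq_zero_of_lt (by simp at hu; omega)
  rw [this]; push_cast; ring

lemma sosU_top (m : ℕ) : sosU m (2*m+1) = 0 := by
  unfold sosU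
  refine Finset.sum_eq_zero fun a ha => ?_
  rcases le_or_gt a m with h | h
  · rw [sosV_gt m (by push_cast; omega : (m:ℤ) < ((2*m+1 : ℕ):ℤ) - a)]; ring
  · rw [sosV_gt m (by exact_mod_cast h : (m:ℤ) < (a:ℤ))]; ring

lemma sosA_anchor (m : ℕ) : sosA m (2*m) = ((2*m).choose m : ℝ) := by
  unfold sosA
  rw [Finset.sum_eq_single_of_mem m (self_mem_range_succ m)]
  · simp [Nat.sub_self, Nat.choose_self]
  · intro u hu hne
    have : (2*u).choose (2*m) = 0 := Nat.choose_eq_zero_of_lt (by simp at hu; omega)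
    rw [this]; push_cast; ring

lemma sosH_anchor (m : ℕ) : sosH m (2*m) = ((2*m).choose m : ℝ) := by
  have hu : sosU m (2*m) = 1 / ((m.factorial : ℝ))^2 := by
    unfold sosU
    rw [Finset.sum_eq_single_of_mem m (by simp; omega)]
    · rw [show ((2*m : ℕ):ℤ) - (m:ℕ) = ((m:ℕ):ℤ) from by push_cast; ring, sosV_nat,
        Nat.choose_self]
      push_cast; ring
    · intro a ha hne
      rcases le_or_gt a m with h | h
      · have hlt : m < 2*m - a := by simp at ha; omega
        rw [sosV_gt m (by push_cast; omega : (m:ℤ) < ((2*m : ℕ):ℤ) - a)]; ring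
      · rw [sosV_gt m (by exact_mod_cast h : (m:ℤ) < (a:ℤ))]; ring
  unfold sosH
  rw [hu]
  have hfact : (((2*m).choose m : ℕ) : ℝ) * (m.factorial : ℝ) * (m.factorial : ℝ)
      = ((2*m).factorial : ℝ) := by
    have := Nat.choose_mul_factorial_mul_factorial (by omega : m ≤ 2*m)
    rw [show 2*m - m = m from by omega] at this
    exact_mod_cast congrArg (Nat.cast (R := ℝ)) this
  have hm : (m.factorial : ℝ) ≠ 0 := by exact_mod_cast m.factorial_ne_zero
  have h4 : (4:ℝ)^m = 2^(2*m) := by rw [show (4:ℝ) = 2^2 from by norm_num, ← pow_mul]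
  rw [h4]
  have h2 : (2:ℝ)^(2*m) ≠ 0 := by positivity
  field_simp
  linear_combination (-1:ℝ) * hfact

lemma sosCore : ∀ (m d l : ℕ), l + d = 2*m+1 → sosA m l = sosH m l := by
  intro m d
  induction d using Nat.strong_induction_on with
  | _ d ih =>
    match d with
    | 0 => intro l hl
           have : l = 2*m+1 := by omega
           subst this
           rw [sosA_top, sosH, sosU_top]; ring
    | 1 => intro l hl
           have : l = 2*m := by omega
           subst this
           rw [sosA_anchor, sosH_anchor]
    | (e+2) => intro l hl
               have h1 : sosA m (l+1) = sosH m (l+1) := ih (e+1) (by omega) (l+1) (by omega)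
               have h2 : sosA m (l+2) = sosH m (l+2) := ih e (by omega) (l+2) (by omega)
               have hA := sosA_rec m l
               have hH := sosH_rec m l
               rw [h1, h2] at hA
               have hγ : ((l:ℝ)+1)*(2*(m:ℝ)-(l:ℝ)) ≠ 0 := by
                 have : 2*(m:ℝ) - l = (e:ℝ)+1 := by
                   have : (l:ℝ) + e + 2 = 2*m+1 := by exact_mod_cast congrArg (Nat.cast (R:=ℝ)) hl
                   linarith
                 rw [this]
                 positivity
               have := sub_eq_zero.mpr (hA.symm.trans hH)
               have hfac : (((l:ℝ)+1)*(2*(m:ℝ)-(l:ℝ))) * (sosA m l - sosH m l) = 0 := by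
                 linear_combination hH - hA
               rcases mul_eq_zero.mp hfac with h | h
               · exact absurd h hγ
               · linarith [h]


lemma evenOddSplit (f : ℕ → ℝ) (M : ℕ) :
    ∑ k ∈ Finset.range (2*M+1), f k
      = ∑ u ∈ Finset.range (M+1), f (2*u) + ∑ u ∈ Finset.range M, f (2*u+1) := by
  induction M with
  | zero => simp
  | succ M ih =>
    rw [show 2*(M+1)+1 = (2*M+1)+1+1 from by omega, Finset.sum_range_succ,
      Finset.sum_range_succ, ih, Finset.sum_range_succ (fun u => f (2*u)) (M+1),
      Finset.sum_range_succ (fun u => f (2*u+1)) M]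
    rw [show 2*M+1+1 = 2*(M+1) from by omega]
    ring

lemma sumReindex (m l : ℕ) (hl : l ≤ 2*m) (W : ℤ → ℝ)
    (h0 : ∀ j : ℤ, j < 0 → W j = 0)
    (h1 : ∀ j : ℤ, (l:ℤ) < j → W j = 0)
    (h2 : ∀ j : ℤ, (m:ℤ) < j → W j = 0)
    (h3 : ∀ j : ℤ, j < (l:ℤ) - m → W j = 0) :
    ∑ s ∈ Finset.range (2*m-l+1), W ((m:ℤ) - s) = ∑ a ∈ Finset.range (l+1), W (a:ℤ) := by
  have step1 : ∑ s ∈ Finset.range (2*m-l+1), W ((m:ℤ) - s)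
      = ∑ s ∈ Finset.range (2*m+1), W ((m:ℤ) - s) := by
    apply Finset.sum_subset (Finset.range_subset_range.mpr (by omega))
    intro s hs hns
    simp only [Finset.mem_range] at hs hns
    rcases lt_or_ge ((m:ℤ) - s) 0 with h | h
    · exact h0 _ h
    · exact h3 _ (by omega)
  have step2 : ∑ s ∈ Finset.range (2*m+1), W ((m:ℤ) - s)
      = ∑ s ∈ Finset.range (2*m+1), W ((s:ℤ) - m) := by
    rw [← Finset.sum_range_reflect (fun s => W ((s:ℤ) - m)) (2*m+1)]
    refine Finset.sum_congr rfl fun s hs => ?_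
    simp only [Finset.mem_range] at hs
    congr 1
    have : ((2*m+1-1-s : ℕ) : ℤ) = 2*(m:ℤ) - s := by
      push_cast [Nat.cast_sub (by omega : s ≤ 2*m+1-1)]
      omega
    rw [this]
    ring
  have step3 : ∑ s ∈ Finset.range (2*m+1), W ((s:ℤ) - m)
      = ∑ a ∈ Finset.range (m+1), W (a:ℤ) := by
    rw [show 2*m+1 = m+(m+1) from by omega]
    rw [Finset.sum_range_add]
    have hz : ∑ s ∈ Finset.range m, W ((s:ℤ) - m) = 0 :=
      Finset.sum_eq_zero fun s hs => h0 _ (by simp at hs; omega)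
    rw [hz, zero_add]
    refine Finset.sum_congr rfl fun a ha => ?_
    congr 1
    push_cast
    ring
  have step4 : ∑ a ∈ Finset.range (m+1), W (a:ℤ)
      = ∑ a ∈ Finset.range (l+1), W (a:ℤ) := by
    rcases le_or_gt l m with h | h
    · symm
      apply Finset.sum_subset (Finset.range_subset_range.mpr (by omega))
      intro a ha hna
      simp only [Finset.mem_range] at ha hna
      exact h1 _ (by omega)
    · apply Finset.sum_subset (Finset.range_subset_range.mpr (by omega))
      intro a ha hna
      simp only [Finset.mem_range] at ha hna
      exact h2 _ (by omega)
  rw [step1, step2, step3, step4]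


lemma sosTerm (m l s t : ℕ) (hst : s + t + l = 2*m) (P : ℝ)
    (hP : P^2 = 1/(4^m*((m.factorial : ℝ))^2)) :
    ((-1:ℝ)^s*2^s*(s.factorial:ℝ)*((m.choose s : ℕ):ℝ)^2*P)
      * ((-1:ℝ)^t*2^t*(t.factorial:ℝ)*((m.choose t : ℕ):ℝ)^2*P)
    = (-1:ℝ)^l/2^l * (sosV m ((m:ℤ)-(s:ℤ)) * sosV m ((l:ℤ)-((m:ℤ)-(s:ℤ)))) := by
  rcases le_or_gt s m with hs | hs
  · rcases le_or_gt t m with ht | ht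
    · -- main case
      have e1 : (m:ℤ) - (s:ℤ) = ((m - s : ℕ) : ℤ) := by push_cast [Nat.cast_sub hs]; ring
      have e2 : (l:ℤ) - ((m - s : ℕ) : ℤ) = ((m - t : ℕ) : ℤ) := by
        push_cast [Nat.cast_sub ht, Nat.cast_sub hs]; omega
      rw [e1, e2, sosV_nat, sosV_nat, Nat.choose_symm hs, Nat.choose_symm ht]
      have hs1 : ((m.choose s : ℕ):ℝ) * (s.factorial:ℝ) * ((m-s).factorial:ℝ)
          = (m.factorial:ℝ) := by
        exact_mod_cast congrArg (Nat.cast (R:=ℝ)) (Nat.choose_mul_factorial_mul_factorial hs)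
      have ht1 : ((m.choose t : ℕ):ℝ) * (t.factorial:ℝ) * ((m-t).factorial:ℝ)
          = (m.factorial:ℝ) := by
        exact_mod_cast congrArg (Nat.cast (R:=ℝ)) (Nat.choose_mul_factorial_mul_factorial ht)
      have hsign : ((-1:ℝ))^s * (-1)^t * (-1)^l = 1 := by
        rw [← pow_add, ← pow_add, show s+t+l = 2*m from hst, pow_mul]
        norm_num
      have hpow : ((2:ℝ))^s * 2^t * 2^l = 4^m := by
        rw [← pow_add, ← pow_add, show s+t+l = 2*m from hst, pow_mul]
        norm_num
      have hsf : ((s.factorial:ℝ)) ≠ 0 := by exact_mod_cast s.factorial_ne_zero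
      have htf : ((t.factorial:ℝ)) ≠ 0 := by exact_mod_cast t.factorial_ne_zero
      have hmsf : (((m-s).factorial:ℝ)) ≠ 0 := by exact_mod_cast (m-s).factorial_ne_zero
      have hmtf : (((m-t).factorial:ℝ)) ≠ 0 := by exact_mod_cast (m-t).factorial_ne_zero
      have hmf : ((m.factorial:ℝ)) ≠ 0 := by exact_mod_cast m.factorial_ne_zero
      have h2l : ((2:ℝ))^l ≠ 0 := by positivity
      have h4m : ((4:ℝ))^m ≠ 0 := by positivity
      have hm2 : ((m.factorial:ℝ))^2
          = (((m.choose s : ℕ):ℝ) * (s.factorial:ℝ) * ((m-s).factorial:ℝ))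
            * (((m.choose t : ℕ):ℝ) * (t.factorial:ℝ) * ((m-t).factorial:ℝ)) := by
        rw [hs1, ht1]; ring
      have hPP : P * P = 1/(4^m*((m.factorial : ℝ))^2) := by
        rw [← hP]; ring
      have hinv : (2:ℝ)^s*2^t*2^l*(P*P)*((m.factorial:ℝ))^2 = 1 := by
        rw [hPP, ← hpow]; field_simp
      rw [hm2] at hinv
      have hc2 : ((-1:ℝ))^l * (-1)^l = 1 := by
        rw [← pow_add, show l+l = 2*l from by ring, pow_mul]; norm_num
      have hab : ((-1:ℝ))^s * (-1)^t = (-1)^l := by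
        linear_combination ((-1:ℝ)^l)*hsign - ((-1:ℝ)^s*(-1:ℝ)^t)*hc2
      field_simp
      linear_combination
        (((-1:ℝ))^s*(-1)^t*((m.choose s : ℕ):ℝ)*((m.choose t : ℕ):ℝ)) * hinv
        + (((m.choose s : ℕ):ℝ)*((m.choose t : ℕ):ℝ)) * hab
    · -- t > m
      have hz : (m.choose t : ℕ) = 0 := Nat.choose_eq_zero_of_lt ht
      rw [hz, sosV_neg m (show (l:ℤ)-((m:ℤ)-(s:ℤ)) < 0 from by omega)]
      push_cast; ring
  · -- s > m
    have hz : (m.choose s : ℕ) = 0 := Nat.choose_eq_zero_of_lt hs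
    rw [hz, sosV_neg m (show (m:ℤ)-(s:ℤ) < 0 from by omega)]
    push_cast; ring


theorem sos_identity_even (n : ℕ) (hn : Even n) (F : ℕ → ℝ) (p : ℤ → ℝ)
    (hF : ∀ k : ℕ, F k =
      if k ≤ n ∧ k % 2 = 0 then
        ((k.choose (k / 2) : ℝ) * ((n - k).choose ((n - k) / 2) : ℝ)) / 2 ^ n
      else 0)
    (hpn : p n = Real.sqrt ((n.choose (n / 2) : ℝ) / (2 ^ n * (n.factorial : ℝ))))
    (hpe : ∀ k : ℕ, 0 < k → k ≤ n → k % 2 = 0 →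
      p ((n : ℤ) - k) = (-1 : ℝ) ^ (k / 2) * (2 : ℝ) ^ (k / 2) * ((k / 2).factorial : ℝ) *
        ((n / 2).choose (k / 2) : ℝ) ^ 2 * p n)
    (hpo : ∀ k : ℕ, 0 < k → k ≤ n → k % 2 = 1 → p ((n : ℤ) - k) = 0)
    (hpout : ∀ j : ℤ, j < 0 ∨ (n : ℤ) < j → p j = 0) :
    ∀ x : ℝ,
      (∑ k ∈ Finset.range (n + 1), (-1 : ℝ) ^ k * F k * laguerreL k x)
        = ∑ l ∈ Finset.range (n + 1), x ^ l *
            ∑ ij ∈ Finset.HasAntidiagonal.antidiagonal (2 * n - 2 * l),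
              p ((n : ℤ) - ij.1) * p ((n : ℤ) - ij.2) := by
  obtain ⟨m, hm⟩ := hn
  have hn2 : n = 2*m := by omega
  subst hn2
  intro x
  have hmf : ((m.factorial : ℝ)) ≠ 0 := by exact_mod_cast m.factorial_ne_zero
  have hfact : (((2*m).choose m : ℕ) : ℝ) * (m.factorial:ℝ) * (m.factorial:ℝ)
      = ((2*m).factorial : ℝ) := by
    have := Nat.choose_mul_factorial_mul_factorial (by omega : m ≤ 2*m)
    rw [show 2*m - m = m from by omega] at this
    exact_mod_cast congrArg (Nat.cast (R := ℝ)) this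
  have hpn2 : p ((2*m : ℕ) : ℤ) ^ 2 = 1/(4^m*((m.factorial : ℝ))^2) := by
    rw [hpn, show (2*m)/2 = m from by omega, Real.sq_sqrt (by positivity)]
    have h2f : (((2*m).factorial : ℝ)) ≠ 0 := by exact_mod_cast (2*m).factorial_ne_zero
    have h4 : (4:ℝ)^m = 2^(2*m) := by
      rw [show (4:ℝ) = 2^2 from by norm_num, ← pow_mul]
    rw [h4]
    have h2 : ((2:ℝ))^(2*m) ≠ 0 := by positivity
    field_simp
    linear_combination hfact
  -- the ρ formula
  have hrho : ∀ s : ℕ, p (((2*m : ℕ) : ℤ) - ((2*s : ℕ) : ℤ))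
      = (-1:ℝ)^s * 2^s * (s.factorial : ℝ) * ((m.choose s : ℕ):ℝ)^2 * p ((2*m : ℕ) : ℤ) := by
    intro s
    rcases Nat.eq_zero_or_pos s with rfl | hs
    · norm_num
    · rcases le_or_gt s m with hsm | hsm
      · have h := hpe (2*s) (by omega) (by omega) (by omega)
        rw [show (2*s)/2 = s from by omega, show (2*m)/2 = m from by omega] at h
        exact h
      · rw [hpout _ (Or.inl (by push_cast; omega))]
        rw [Nat.choose_eq_zero_of_lt hsm]
        push_cast; ring
  -- RHS per-l
  have hRHS : ∀ l ∈ Finset.range (2*m+1),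
      ∑ ij ∈ Finset.HasAntidiagonal.antidiagonal (2*(2*m) - 2*l),
          p (((2*m:ℕ):ℤ) - ij.1) * p (((2*m:ℕ):ℤ) - ij.2)
        = (-1:ℝ)^l/2^l * sosU m l := by
    intro l hl
    have hl' : l ≤ 2*m := by simp at hl; omega
    rw [show 2*(2*m) - 2*l = 2*(2*m-l) from by omega]
    rw [Finset.Nat.sum_antidiagonal_eq_sum_range_succ
      (fun i j => p (((2*m:ℕ):ℤ) - i) * p (((2*m:ℕ):ℤ) - j)) (2*(2*m-l))]
    rw [show (2*(2*m-l)).succ = 2*(2*m-l)+1 from rfl]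
    rw [evenOddSplit
      (fun i => p (((2*m:ℕ):ℤ) - (i:ℕ)) * p (((2*m:ℕ):ℤ) - ((2*(2*m-l) - i : ℕ)))) (2*m-l)]
    have hodd : ∑ u ∈ Finset.range (2*m-l),
        (fun i => p (((2*m:ℕ):ℤ) - (i:ℕ)) * p (((2*m:ℕ):ℤ) - ((2*(2*m-l) - i : ℕ)))) (2*u+1) = 0 := by
      refine Finset.sum_eq_zero fun u hu => ?_
      simp only []
      have h1 : p (((2*m:ℕ):ℤ) - ((2*u+1 : ℕ):ℤ)) = 0 := by
        rcases le_or_gt (2*u+1) (2*m) with h | h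
        · exact hpo (2*u+1) (by omega) h (by omega)
        · exact hpout _ (Or.inl (by push_cast; omega))
      rw [h1, zero_mul]
    have heven : ∑ s ∈ Finset.range (2*m-l+1),
        (fun i => p (((2*m:ℕ):ℤ) - (i:ℕ)) * p (((2*m:ℕ):ℤ) - ((2*(2*m-l) - i : ℕ)))) (2*s)
        = (-1:ℝ)^l/2^l * sosU m l := by
      have hterm : ∀ s ∈ Finset.range (2*m-l+1),
          (fun i => p (((2*m:ℕ):ℤ) - (i:ℕ)) * p (((2*m:ℕ):ℤ) - ((2*(2*m-l) - i : ℕ)))) (2*s)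
          = (-1:ℝ)^l/2^l * ((fun j => sosV m j * sosV m ((l:ℤ) - j)) ((m:ℤ) - (s:ℤ))) := by
        intro s hs
        simp only [Finset.mem_range] at hs
        simp only []
        rw [show 2*(2*m-l) - 2*s = 2*(2*m-l-s) from by omega]
        rw [hrho s, hrho (2*m-l-s)]
        exact sosTerm m l s (2*m-l-s) (by omega) (p ((2*m:ℕ):ℤ)) hpn2
      rw [Finset.sum_congr rfl hterm, ← Finset.mul_sum]
      congr 1
      have := sumReindex m l hl' (fun j => sosV m j * sosV m ((l:ℤ) - j))
        (fun j hj => by show sosV m j * sosV m ((l:ℤ) - j) = 0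
                        rw [sosV_neg m hj, zero_mul])
        (fun j hj => by show sosV m j * sosV m ((l:ℤ) - j) = 0
                        rw [sosV_neg m (by omega : (l:ℤ) - j < 0), mul_zero])
        (fun j hj => by show sosV m j * sosV m ((l:ℤ) - j) = 0
                        rw [sosV_gt m hj, zero_mul])
        (fun j hj => by show sosV m j * sosV m ((l:ℤ) - j) = 0
                        rw [sosV_gt m (by omega : (m:ℤ) < (l:ℤ) - j), mul_zero])
      rw [this]
      rfl
    rw [hodd, heven]
    ring
  have hLHS : ∑ k ∈ Finset.range (2*m+1), (-1:ℝ)^k * F k * laguerreL k x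
      = ∑ l ∈ Finset.range (2*m+1), x^l * ((-1:ℝ)^l/2^l * sosU m l) := by
    rw [evenOddSplit (fun k => (-1:ℝ)^k * F k * laguerreL k x) m]
    have hodd : ∑ u ∈ Finset.range m,
        (fun k => (-1:ℝ)^k * F k * laguerreL k x) (2*u+1) = 0 := by
      refine Finset.sum_eq_zero fun u hu => ?_
      show (-1:ℝ)^(2*u+1) * F (2*u+1) * laguerreL (2*u+1) x = 0
      rw [hF (2*u+1), if_neg (by rintro ⟨h1, h2⟩; omega)]
      ring
    have heven : ∑ u ∈ Finset.range (m+1),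
        (fun k => (-1:ℝ)^k * F k * laguerreL k x) (2*u)
        = ∑ l ∈ Finset.range (2*m+1), x^l * ((-1:ℝ)^l/2^l * sosU m l) := by
      have hstep : ∀ u ∈ Finset.range (m+1),
          (fun k => (-1:ℝ)^k * F k * laguerreL k x) (2*u)
          = ∑ l ∈ Finset.range (2*m+1),
              ((-1:ℝ)^l/(l.factorial:ℝ) * x^l / 4^m)
                * ((((2*u).choose u : ℕ):ℝ) * (((2*m - 2*u).choose (m - u) : ℕ):ℝ)
                    * (((2*u).choose l : ℕ):ℝ)) := by
        intro u hu
        simp only [Finset.mem_range] at hu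
        show (-1:ℝ)^(2*u) * F (2*u) * laguerreL (2*u) x = _
        rw [hF (2*u), if_pos ⟨by omega, by omega⟩]
        rw [show (2*u)/2 = u from by omega, show (2*m - 2*u)/2 = m - u from by omega]
        have hpm1 : (-1:ℝ)^(2*u) = 1 := by rw [pow_mul]; norm_num
        rw [hpm1]
        have hlag : laguerreL (2*u) x
            = ∑ l ∈ Finset.range (2*m+1),
                ((-1:ℝ)^l/(l.factorial:ℝ)) * (((2*u).choose l : ℕ):ℝ) * x^l := by
          unfold laguerreL
          apply Finset.sum_subset (Finset.range_subset_range.mpr (by omega))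
          intro l hl hnl
          simp only [Finset.mem_range] at hl hnl
          rw [Nat.choose_eq_zero_of_lt (by omega)]
          norm_num
        rw [hlag, Finset.mul_sum]
        refine Finset.sum_congr rfl fun l hl => ?_
        have h4 : (2:ℝ)^(2*m) = 4^m := by
          rw [show (4:ℝ) = 2^2 from by norm_num, ← pow_mul]
        rw [h4]
        ring
      rw [Finset.sum_congr rfl hstep, Finset.sum_comm]
      refine Finset.sum_congr rfl fun l hl => ?_
      rw [← Finset.mul_sum]
      have hsA : ∑ u ∈ Finset.range (m+1),
          ((((2*u).choose u : ℕ):ℝ) * (((2*m - 2*u).choose (m - u) : ℕ):ℝ)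
            * (((2*u).choose l : ℕ):ℝ)) = sosA m l := rfl
      rw [hsA, sosCore m (2*m+1-l) l (by simp at hl; omega)]
      unfold sosH
      have hlf : ((l.factorial:ℝ)) ≠ 0 := by exact_mod_cast l.factorial_ne_zero
      have h4m : ((4:ℝ))^m ≠ 0 := by positivity
      have h2l : ((2:ℝ))^l ≠ 0 := by positivity
      field_simp
    rw [hodd, heven, add_zero]
  rw [hLHS]
  exact Finset.sum_congr rfl fun l hl => by rw [hRHS l hl]
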